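/- Let α > 0, q_i, q_j ∈ (0,1), and let ξ⁺_α denote the optimal pairwise marginal function ξ⁺_α(x,y) = (1/(2α))(1 + α(x+y) - sqrt((1+α(x+y))² - 4α(1+α)xy)), and let ξ⁻ denote the same expression with α replaced by α' = -α/(α+1). Then ξ⁻(q_i, q_j) - q_i q_j = -ξ⁺_α(q_i, 1-q_j) + q_i(1-q_j). -/

import Mathlib

noncomputable def xiOpt (α x y : ℝ) : ℝ :=
  (1 / (2 * α)) * ((1 + α * (x + y)) -
    Real.sqrt ((1 + α * (x + y)) ^ 2 - 4 * α * (1 + α) * x * y))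

theorem bethe_xi_reflection (α qi qj : ℝ) (hα : 0 < α)
    (hqi : qi ∈ Set.Ioo (0:ℝ) 1) (hqj : qj ∈ Set.Ioo (0:ℝ) 1) :
    xiOpt (-α / (α + 1)) qi qj - qi * qj = -xiOpt α qi (1 - qj) + qi * (1 - qj) := by
  have h1 : (0:ℝ) < α + 1 := by linarith
  have h1' : α + 1 ≠ 0 := ne_of_gt h1
  have hαne : α ≠ 0 := ne_of_gt hα
  unfold xiOpt
  set a' : ℝ := -α / (α + 1) with ha'
  have hDeq : (1 + a' * (qi + qj)) ^ 2 - 4 * a' * (1 + a') * qi * qj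
      = ((1 + α * (qi + (1 - qj))) ^ 2 - 4 * α * (1 + α) * qi * (1 - qj))
        * (1 / (α + 1)) ^ 2 := by
    rw [ha']
    field_simp
    ring
  have hsqrt : Real.sqrt ((1 + a' * (qi + qj)) ^ 2 - 4 * a' * (1 + a') * qi * qj)
      = Real.sqrt ((1 + α * (qi + (1 - qj))) ^ 2 - 4 * α * (1 + α) * qi * (1 - qj))
        * (1 / (α + 1)) := by
    rw [hDeq, Real.sqrt_mul' _ (by positivity : (0:ℝ) ≤ (1 / (α + 1)) ^ 2),
      Real.sqrt_sq (by positivity)]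
  rw [hsqrt]
  have ha'ne : a' ≠ 0 := by
    simp only [ha', div_ne_zero_iff, neg_ne_zero]
    exact ⟨hαne, h1'⟩
  rw [ha']
  field_simp
  ring
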